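/- Local SGD drift bound (Lemma B.3). In the local SGD model with τ steps, step size η and initial point x⁰, suppose S > 0, τ ≥ 1 and 0 ≤ η ≤ 1/(√6·S·τ). Then ∑_{i=0}^{τ−1} 𝔼[‖X_i − x⁰‖²] ≤ 12τ³η²·(2σ² + G²). -/

import Mathlib

open MeasureTheory
open scoped RealInnerProductSpace ENNReal

set_option linter.unusedSectionVars false
set_option linter.unusedVariables false


private lemma aux_ofReal_normsq {E : Type*} [NormedAddCommGroup E] (v : E) :
    ENNReal.ofReal (‖v‖ ^ 2) = (‖v‖₊ : ℝ≥0∞) ^ 2 := by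
  rw [ENNReal.ofReal_pow (norm_nonneg v), ofReal_norm]
  rfl

private lemma aux_elpsq {α E : Type*} [MeasurableSpace α] [NormedAddCommGroup E]
    (μ : Measure α) (u : α → E) :
    eLpNorm u 2 μ ^ 2 = ∫⁻ a, (‖u a‖₊ : ℝ≥0∞) ^ 2 ∂μ := by
  rw [eLpNorm_eq_lintegral_rpow_enorm_toReal two_ne_zero ENNReal.ofNat_ne_top]
  rw [← ENNReal.rpow_natCast _ 2, ← ENNReal.rpow_mul, ENNReal.toReal_ofNat]
  norm_num
  rfl

private lemma aux_sq_le {a b : ℝ≥0∞} (h : a ^ 2 ≤ b ^ 2) : a ≤ b := by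
  by_contra hab
  exact absurd h (not_le.2 (ENNReal.pow_lt_pow_left two_ne_zero (not_le.1 hab)))

private lemma aux_sqint {Z : Type*} [MeasurableSpace Z] (ν : Measure Z) {f : Z → ℝ}
    (hf : Measurable f) (hfin : ∫⁻ z, ENNReal.ofReal (f z ^ 2) ∂ν ≠ ∞) :
    Integrable (fun z => f z ^ 2) ν := by
  refine ⟨(hf.pow_const 2).aestronglyMeasurable, ?_⟩
  rw [hasFiniteIntegral_iff_norm]
  have : ∀ z, ENNReal.ofReal ‖f z ^ 2‖ = ENNReal.ofReal (f z ^ 2) := fun z => by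
    rw [Real.norm_eq_abs, abs_of_nonneg (sq_nonneg _)]
  simp_rw [this]
  exact hfin.lt_top

private lemma aux_H_le {E Z : Type*} [NormedAddCommGroup E] [MeasurableSpace E]
    [OpensMeasurableSpace E] [MeasurableSpace Z] (ν : Measure Z) [IsProbabilityMeasure ν]
    (G : ℝ) (w : Z → E) (hw : Measurable w)
    (hsec : ∫ z, ‖w z‖ ^ 2 ∂ν ≤ G ^ 2)
    (hfin : ∫⁻ z, (‖w z‖₊ : ℝ≥0∞) ^ 2 ∂ν ≠ ∞) :
    ∫⁻ z, (‖w z‖₊ : ℝ≥0∞) ^ 2 ∂ν ≤ ENNReal.ofReal (G ^ 2) := by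
  have hms : Measurable fun z => ‖w z‖ ^ 2 := hw.norm.pow_const 2
  have htr : (∫⁻ z, (‖w z‖₊ : ℝ≥0∞) ^ 2 ∂ν).toReal ≤ G ^ 2 := by
    have := integral_eq_lintegral_of_nonneg_ae (μ := ν)
      (ae_of_all _ fun z => sq_nonneg ‖w z‖) hms.aestronglyMeasurable
    simp_rw [aux_ofReal_normsq] at this
    rw [← this]
    exact hsec
  calc ∫⁻ z, (‖w z‖₊ : ℝ≥0∞) ^ 2 ∂ν
      = ENNReal.ofReal (∫⁻ z, (‖w z‖₊ : ℝ≥0∞) ^ 2 ∂ν).toReal := (ENNReal.ofReal_toReal hfin).symm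
    _ ≤ ENNReal.ofReal (G ^ 2) := ENNReal.ofReal_le_ofReal htr

private lemma aux_moments {E Z : Type*} [NormedAddCommGroup E] [MeasurableSpace E]
    [OpensMeasurableSpace E] [MeasurableSpace Z] (ν : Measure Z) [IsProbabilityMeasure ν]
    (G : ℝ) (w : Z → E) (hw : Measurable w)
    (hsec : ∫ z, ‖w z‖ ^ 2 ∂ν ≤ G ^ 2)
    (hfin : ∫⁻ z, (‖w z‖₊ : ℝ≥0∞) ^ 2 ∂ν ≠ ∞) :
    Integrable (fun z => ‖w z‖ ^ 2) ν ∧ Integrable (fun z => ‖w z‖) ν ∧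
      ∫ z, ‖w z‖ ∂ν ≤ |G| ∧ 0 ≤ ∫ z, ‖w z‖ ∂ν := by
  have hfin' : ∫⁻ z, ENNReal.ofReal (‖w z‖ ^ 2) ∂ν ≠ ∞ := by
    simp_rw [aux_ofReal_normsq]; exact hfin
  have hsqint : Integrable (fun z => ‖w z‖ ^ 2) ν := aux_sqint ν hw.norm hfin'
  have hbig : Integrable (fun z => 1 + ‖w z‖ ^ 2) ν := (integrable_const (1:ℝ)).add hsqint
  have h1int : Integrable (fun z => ‖w z‖) ν := by
    refine Integrable.mono' hbig hw.norm.aestronglyMeasurable (ae_of_all _ fun z => ?_)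
    rw [Real.norm_eq_abs, abs_of_nonneg (norm_nonneg _)]
    nlinarith [sq_nonneg (‖w z‖ - 1), norm_nonneg (w z)]
  set m : ℝ := ∫ z, ‖w z‖ ∂ν with hm
  have hm0 : 0 ≤ m := integral_nonneg fun z => norm_nonneg _
  have hvar : 0 ≤ ∫ z, (‖w z‖ - m) ^ 2 ∂ν := integral_nonneg fun z => sq_nonneg _
  have h2m : Integrable (fun z => 2 * m * ‖w z‖) ν := h1int.const_mul _
  have hsub : Integrable (fun z => ‖w z‖ ^ 2 - 2 * m * ‖w z‖) ν := hsqint.sub h2m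
  have hexp : ∫ z, (‖w z‖ - m) ^ 2 ∂ν = (∫ z, ‖w z‖ ^ 2 ∂ν) - m ^ 2 := by
    have hpt : ∀ z, (‖w z‖ - m) ^ 2 = ‖w z‖ ^ 2 - 2 * m * ‖w z‖ + m ^ 2 := fun z => by ring
    calc ∫ z, (‖w z‖ - m) ^ 2 ∂ν
        = ∫ z, (‖w z‖ ^ 2 - 2 * m * ‖w z‖ + m ^ 2) ∂ν :=
          integral_congr_ae (ae_of_all _ hpt)
      _ = (∫ z, (‖w z‖ ^ 2 - 2 * m * ‖w z‖) ∂ν) + ∫ _z, m ^ 2 ∂ν := integral_add hsub (integrable_const _)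
      _ = (∫ z, ‖w z‖ ^ 2 ∂ν) - (∫ z, 2 * m * ‖w z‖ ∂ν) + m ^ 2 := by
          rw [integral_sub hsqint h2m, integral_const]; simp [measure_univ]
      _ = (∫ z, ‖w z‖ ^ 2 ∂ν) - m ^ 2 := by
          rw [integral_const_mul, ← hm]; ring
  have hm2 : m ^ 2 ≤ G ^ 2 := by
    rw [hexp] at hvar
    nlinarith [hsec]
  have hmle : m ≤ |G| := by nlinarith [abs_nonneg G, sq_abs G]
  exact ⟨hsqint, h1int, hmle, hm0⟩

private lemma aux_dichot {Z : Type*} [MeasurableSpace Z] (ν : Measure Z)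
    (ψ γ : Z → ℝ≥0∞) (hγ : Measurable γ) (h : ∀ z, ψ z ≤ γ z ∨ ψ z = ∞) :
    (∫⁻ z, ψ z ∂ν) ≤ ∫⁻ z, γ z ∂ν ∨ (∫⁻ z, ψ z ∂ν) = ∞ := by
  by_cases hex : ∃ s : SimpleFunc Z ℝ≥0∞, (⇑s ≤ ψ) ∧ ν {z | γ z < s z} ≠ 0
  · right
    obtain ⟨s, hs, hA⟩ := hex
    have hAmeas : MeasurableSet {z | γ z < s z} := measurableSet_lt hγ s.measurable
    have hpt : ∀ z, ({z | γ z < s z}).indicator (fun _ => (∞ : ℝ≥0∞)) z ≤ ψ z := by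
      intro z
      by_cases hz : z ∈ {z | γ z < s z}
      · rw [Set.indicator_of_mem hz]
        rcases h z with h1 | h1
        · exact absurd (lt_of_lt_of_le hz (hs z)) (not_lt.2 h1)
        · rw [h1]
      · rw [Set.indicator_of_notMem hz]; exact zero_le
    have : (∞ : ℝ≥0∞) = ∞ * ν {z | γ z < s z} := (ENNReal.top_mul hA).symm
    rw [eq_top_iff, this]
    calc ∞ * ν {z | γ z < s z} = ∫⁻ z, ({z | γ z < s z}).indicator (fun _ => (∞:ℝ≥0∞)) z ∂ν :=
          (lintegral_indicator_const hAmeas ∞).symm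
      _ ≤ ∫⁻ z, ψ z ∂ν := lintegral_mono hpt
  · left
    push_neg at hex
    rw [show (∫⁻ z, ψ z ∂ν) = lintegral ν ψ from rfl, lintegral_def]
    refine iSup_le fun s => iSup_le fun hs => ?_
    rw [← SimpleFunc.lintegral_eq_lintegral]
    refine lintegral_mono_ae ?_
    have h0 : ν {z | γ z < s z} = 0 := hex s hs
    have : ∀ᵐ z ∂ν, ¬ (γ z < s z) := by
      rw [ae_iff]; simpa using h0
    exact this.mono fun z hz => not_lt.1 hz

section
variable {E Z : Type*} [NormedAddCommGroup E] [InnerProductSpace ℝ E]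
  [MeasurableSpace E] [BorelSpace E]
  [MeasurableSpace Z] {ν : Measure Z} [IsProbabilityMeasure ν]

private lemma aux_J0top {η : ℝ} (hηpos : 0 < η) (w : Z → E) (hw : Measurable w) (d : E)
    (htop : ∫⁻ z, (‖w z‖₊ : ℝ≥0∞) ^ 2 ∂ν = ∞) :
    ∫⁻ z, ENNReal.ofReal (‖d - η • w z‖ ^ 2) ∂ν = ∞ := by
  by_contra hJ
  set u : Z → E := fun z => d - η • w z with hu
  have h4 : (0:ℝ) ≤ η⁻¹ := by positivity
  have hpt : ∀ z, (‖w z‖₊ : ℝ≥0∞) ^ 2 ≤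
      ENNReal.ofReal (η⁻¹ ^ 2 * (2 * ‖d‖ ^ 2)) +
        ENNReal.ofReal (η⁻¹ ^ 2 * 2) * ENNReal.ofReal (‖u z‖ ^ 2) := by
    intro z
    have h2 : ‖w z‖ = η⁻¹ * ‖d - u z‖ := by
      rw [hu]
      simp only [sub_sub_cancel]
      rw [norm_smul, Real.norm_eq_abs, abs_of_pos hηpos, ← mul_assoc,
        inv_mul_cancel₀ hηpos.ne', one_mul]
    have h3 : ‖d - u z‖ ≤ ‖d‖ + ‖u z‖ := norm_sub_le _ _
    have h5 : ‖w z‖ ≤ η⁻¹ * (‖d‖ + ‖u z‖) := by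
      rw [h2]; exact mul_le_mul_of_nonneg_left h3 h4
    have h6 : ‖w z‖ ^ 2 ≤ (η⁻¹ * (‖d‖ + ‖u z‖)) ^ 2 := pow_le_pow_left₀ (norm_nonneg _) h5 2
    have h1 : ‖w z‖ ^ 2 ≤ η⁻¹ ^ 2 * (2 * ‖d‖ ^ 2) + (η⁻¹ ^ 2 * 2) * ‖u z‖ ^ 2 := by
      nlinarith [mul_nonneg (sq_nonneg η⁻¹) (sq_nonneg (‖d‖ - ‖u z‖))]
    calc (‖w z‖₊ : ℝ≥0∞) ^ 2 = ENNReal.ofReal (‖w z‖ ^ 2) := (aux_ofReal_normsq _).symm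
      _ ≤ ENNReal.ofReal (η⁻¹ ^ 2 * (2 * ‖d‖ ^ 2) + (η⁻¹ ^ 2 * 2) * ‖u z‖ ^ 2) :=
          ENNReal.ofReal_le_ofReal h1
      _ ≤ ENNReal.ofReal (η⁻¹ ^ 2 * (2 * ‖d‖ ^ 2)) +
            ENNReal.ofReal ((η⁻¹ ^ 2 * 2) * ‖u z‖ ^ 2) := ENNReal.ofReal_add_le
      _ = _ := by congr 1; rw [ENNReal.ofReal_mul (show (0:ℝ) ≤ η⁻¹ ^ 2 * 2 by positivity)]
  have hfin : (∫⁻ z, (‖w z‖₊ : ℝ≥0∞) ^ 2 ∂ν) ≤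
      ENNReal.ofReal (η⁻¹ ^ 2 * (2 * ‖d‖ ^ 2)) +
        ENNReal.ofReal (η⁻¹ ^ 2 * 2) * ∫⁻ z, ENNReal.ofReal (‖u z‖ ^ 2) ∂ν := by
    calc ∫⁻ z, (‖w z‖₊ : ℝ≥0∞) ^ 2 ∂ν
        ≤ ∫⁻ z, (ENNReal.ofReal (η⁻¹ ^ 2 * (2 * ‖d‖ ^ 2)) +
            ENNReal.ofReal (η⁻¹ ^ 2 * 2) * ENNReal.ofReal (‖u z‖ ^ 2)) ∂ν := lintegral_mono hpt
      _ = _ := by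
          rw [lintegral_add_left measurable_const,
            lintegral_const_mul' _ _ ENNReal.ofReal_ne_top, lintegral_const]
          simp [measure_univ]
  rw [htop] at hfin
  have hlt : ENNReal.ofReal (η⁻¹ ^ 2 * (2 * ‖d‖ ^ 2)) +
      ENNReal.ofReal (η⁻¹ ^ 2 * 2) * ∫⁻ z, ENNReal.ofReal (‖u z‖ ^ 2) ∂ν < ∞ :=
    ENNReal.add_lt_top.2 ⟨ENNReal.ofReal_lt_top,
      ENNReal.mul_lt_top ENNReal.ofReal_lt_top (lt_top_iff_ne_top.2 hJ)⟩
  exact absurd hfin (not_le.2 hlt)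




/-- Key lower bound for one SGD-type step. -/
private lemma aux_lower {η G : ℝ} (hηpos : 0 < η) (w : Z → E) (hw : Measurable w)
    (hsec : ∫ z, ‖w z‖ ^ 2 ∂ν ≤ G ^ 2) (d : E) :
    ENNReal.ofReal (‖d‖ ^ 2) ≤
      2 * (∫⁻ z, ENNReal.ofReal (‖d - η • w z‖ ^ 2) ∂ν) + ENNReal.ofReal (4 * η ^ 2 * G ^ 2) := by
  by_cases hJ : (∫⁻ z, ENNReal.ofReal (‖d - η • w z‖ ^ 2) ∂ν) = ∞
  · rw [hJ]
    simp [ENNReal.top_mul]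
  have hH : ∫⁻ z, (‖w z‖₊ : ℝ≥0∞) ^ 2 ∂ν ≠ ∞ := fun htop => hJ (aux_J0top hηpos w hw d htop)
  obtain ⟨hsqint, h1int, hmle, hm0⟩ := aux_moments (ν := ν) G w hw hsec hH
  set m : ℝ := ∫ z, ‖w z‖ ∂ν
  have humeas : Measurable fun z => d - η • w z :=
    ((continuous_const.sub (continuous_id.const_smul η)).measurable).comp hw
  have husq : Integrable (fun z => ‖d - η • w z‖ ^ 2) ν := by
    refine aux_sqint ν humeas.norm ?_
    simpa using hJ
  have hinner : Integrable (fun z => ⟪d, w z⟫) ν := by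
    refine Integrable.mono' (h1int.const_mul ‖d‖)
      (((innerSL ℝ d).continuous.measurable.comp hw).aestronglyMeasurable)
      (ae_of_all _ fun z => ?_)
    rw [Real.norm_eq_abs]
    exact abs_real_inner_le_norm d (w z)
  have h2e : Integrable (fun z => 2 * η * ⟪d, w z⟫) ν := hinner.const_mul _
  have hsub : Integrable (fun z => ‖d‖ ^ 2 - 2 * η * ⟪d, w z⟫) ν := (integrable_const _).sub h2e
  have he2 : Integrable (fun z => η ^ 2 * ‖w z‖ ^ 2) ν := hsqint.const_mul _
  have hI : ∫ z, ‖d - η • w z‖ ^ 2 ∂ν =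
      ‖d‖ ^ 2 - 2 * η * ∫ z, ⟪d, w z⟫ ∂ν + η ^ 2 * ∫ z, ‖w z‖ ^ 2 ∂ν := by
    have hpt : ∀ z, ‖d - η • w z‖ ^ 2 =
        ‖d‖ ^ 2 - 2 * η * ⟪d, w z⟫ + η ^ 2 * ‖w z‖ ^ 2 := by
      intro z
      rw [norm_sub_sq_real, real_inner_smul_right, norm_smul, Real.norm_eq_abs]
      rw [mul_pow, sq_abs]
      ring
    calc ∫ z, ‖d - η • w z‖ ^ 2 ∂ν
        = ∫ z, (‖d‖ ^ 2 - 2 * η * ⟪d, w z⟫ + η ^ 2 * ‖w z‖ ^ 2) ∂ν :=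
          integral_congr_ae (ae_of_all _ hpt)
      _ = (∫ z, (‖d‖ ^ 2 - 2 * η * ⟪d, w z⟫) ∂ν) + ∫ z, η ^ 2 * ‖w z‖ ^ 2 ∂ν :=
          integral_add hsub he2
      _ = _ := by
          rw [integral_sub (integrable_const _) h2e, integral_const, integral_const_mul,
            integral_const_mul]
          simp [measure_univ]
  have hinle : ∫ z, ⟪d, w z⟫ ∂ν ≤ ‖d‖ * m := by
    calc ∫ z, ⟪d, w z⟫ ∂ν ≤ ∫ z, ‖d‖ * ‖w z‖ ∂ν :=
        integral_mono hinner (h1int.const_mul _) fun z => real_inner_le_norm d (w z)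
      _ = ‖d‖ * m := integral_const_mul _ _
  have hIlow : ‖d‖ ^ 2 / 2 - 2 * η ^ 2 * G ^ 2 ≤ ∫ z, ‖d - η • w z‖ ^ 2 ∂ν := by
    rw [hI]
    have hwsq : 0 ≤ ∫ z, ‖w z‖ ^ 2 ∂ν := integral_nonneg fun z => sq_nonneg _
    nlinarith [sq_nonneg (‖d‖ - 2 * η * |G|), mul_le_mul_of_nonneg_left hinle
      (by positivity : (0:ℝ) ≤ 2 * η), mul_le_mul_of_nonneg_left hmle
      (by positivity : (0:ℝ) ≤ 2 * η * ‖d‖), norm_nonneg d, abs_nonneg G, sq_abs G,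
      mul_nonneg (mul_nonneg (by positivity : (0:ℝ) ≤ 2*η) hm0) (norm_nonneg d)]
  have hreal : ‖d‖ ^ 2 ≤ 2 * ∫ z, ‖d - η • w z‖ ^ 2 ∂ν + 4 * η ^ 2 * G ^ 2 := by linarith
  calc ENNReal.ofReal (‖d‖ ^ 2)
      ≤ ENNReal.ofReal (2 * ∫ z, ‖d - η • w z‖ ^ 2 ∂ν + 4 * η ^ 2 * G ^ 2) :=
        ENNReal.ofReal_le_ofReal hreal
    _ ≤ ENNReal.ofReal (2 * ∫ z, ‖d - η • w z‖ ^ 2 ∂ν) + ENNReal.ofReal (4 * η ^ 2 * G ^ 2) :=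
        ENNReal.ofReal_add_le
    _ = _ := by
        congr 1
        rw [ENNReal.ofReal_mul (by norm_num : (0:ℝ) ≤ 2), ENNReal.ofReal_ofNat,
          ofReal_integral_eq_lintegral_ofReal husq (ae_of_all _ fun z => sq_nonneg _)]

/-- Upper bound for the γ-integral in the dichotomy step. -/
private lemma aux_gamma {η G : ℝ} (hη0 : 0 ≤ η) (w : Z → E) (hw : Measurable w)
    (hsec : ∫ z, ‖w z‖ ^ 2 ∂ν ≤ G ^ 2)
    (hH : ∫⁻ z, (‖w z‖₊ : ℝ≥0∞) ^ 2 ∂ν ≠ ∞) (c : ℝ) (hc : 0 ≤ c) (d : E) :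
    ∫⁻ z, ENNReal.ofReal ((‖d - η • w z‖ + c) ^ 2) ∂ν ≤
      ENNReal.ofReal ((‖d‖ + η * |G| + c) ^ 2) := by
  have hHle : ∫⁻ z, (‖w z‖₊ : ℝ≥0∞) ^ 2 ∂ν ≤ ENNReal.ofReal (G ^ 2) :=
    aux_H_le ν G w hw hsec hH
  set ρ : Z → ℝ := fun z => ‖d - η • w z‖ + c with hρ
  have hρ0 : ∀ z, 0 ≤ ρ z := fun z => by positivity
  have hLHS : ∫⁻ z, ENNReal.ofReal ((‖d - η • w z‖ + c) ^ 2) ∂ν = eLpNorm ρ 2 ν ^ 2 := by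
    rw [aux_elpsq]
    refine lintegral_congr fun z => ?_
    show ENNReal.ofReal ((‖d - η • w z‖ + c) ^ 2) = (‖ρ z‖₊ : ℝ≥0∞) ^ 2
    rw [← ENNReal.coe_pow, ← nnnorm_pow, ← enorm_eq_nnnorm, Real.enorm_eq_ofReal (by positivity)]
  have hwnorm : eLpNorm (fun z => ‖w z‖) 2 ν ≤ ENNReal.ofReal |G| := by
    refine aux_sq_le ?_
    rw [aux_elpsq]
    calc ∫⁻ z, (‖(‖w z‖)‖₊ : ℝ≥0∞) ^ 2 ∂ν = ∫⁻ z, (‖w z‖₊ : ℝ≥0∞) ^ 2 ∂ν := by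
          simp [nnnorm_norm]
      _ ≤ ENNReal.ofReal (G ^ 2) := hHle
      _ = ENNReal.ofReal |G| ^ 2 := by
          rw [← ENNReal.ofReal_pow (abs_nonneg G), sq_abs]
  have hconst : eLpNorm (fun _ : Z => ‖d‖ + c) 2 ν = ENNReal.ofReal (‖d‖ + c) := by
    have hν : ν ≠ 0 := IsProbabilityMeasure.ne_zero ν
    rw [eLpNorm_const _ two_ne_zero hν]
    simp [measure_univ, Real.enorm_eq_ofReal (by positivity : (0:ℝ) ≤ ‖d‖ + c)]
  have hsmul : eLpNorm (fun z => η * ‖w z‖) 2 ν = ENNReal.ofReal η * eLpNorm (fun z => ‖w z‖) 2 ν := by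
    have : (fun z => η * ‖w z‖) = η • (fun z => ‖w z‖) := rfl
    rw [this, eLpNorm_const_smul]
    congr 1
    exact (Real.enorm_eq_ofReal hη0)
  have htri : eLpNorm ρ 2 ν ≤ ENNReal.ofReal (‖d‖ + c) + ENNReal.ofReal η * ENNReal.ofReal |G| := by
    have hmono : eLpNorm ρ 2 ν ≤ eLpNorm (fun z => (‖d‖ + c) + η * ‖w z‖) 2 ν := by
      refine eLpNorm_mono fun z => ?_
      rw [Real.norm_eq_abs, Real.norm_eq_abs, abs_of_nonneg (hρ0 z),
        abs_of_nonneg (by positivity : (0:ℝ) ≤ (‖d‖ + c) + η * ‖w z‖)]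
      have : ‖d - η • w z‖ ≤ ‖d‖ + η * ‖w z‖ := by
        calc ‖d - η • w z‖ ≤ ‖d‖ + ‖η • w z‖ := norm_sub_le _ _
          _ = ‖d‖ + η * ‖w z‖ := by rw [norm_smul, Real.norm_eq_abs, abs_of_nonneg hη0]
      simp only [hρ]
      linarith
    refine hmono.trans ?_
    calc eLpNorm (fun z => (‖d‖ + c) + η * ‖w z‖) 2 ν
        ≤ eLpNorm (fun _ : Z => ‖d‖ + c) 2 ν + eLpNorm (fun z => η * ‖w z‖) 2 ν :=
          eLpNorm_add_le aestronglyMeasurable_const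
            ((hw.norm.const_mul η).aestronglyMeasurable) one_le_two
      _ ≤ _ := by
          rw [hconst, hsmul]
          exact add_le_add le_rfl (mul_le_mul_right hwnorm _)
  calc ∫⁻ z, ENNReal.ofReal ((‖d - η • w z‖ + c) ^ 2) ∂ν = eLpNorm ρ 2 ν ^ 2 := hLHS
    _ ≤ (ENNReal.ofReal (‖d‖ + c) + ENNReal.ofReal η * ENNReal.ofReal |G|) ^ 2 :=
        pow_le_pow_left' htri 2
    _ = ENNReal.ofReal ((‖d‖ + η * |G| + c) ^ 2) := by
        rw [← ENNReal.ofReal_mul hη0, ← ENNReal.ofReal_add (by positivity) (by positivity),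
          ← ENNReal.ofReal_pow (by positivity)]
        congr 1
        ring
end


noncomputable def PhiF {E Z : Type*} [NormedAddCommGroup E] [InnerProductSpace ℝ E]
    [MeasurableSpace Z] (ν : Measure Z) (g : E → Z → E) (η : ℝ) (x0 : E) : ℕ → E → ℝ≥0∞
  | 0 => fun b => ENNReal.ofReal (‖b - x0‖ ^ 2)
  | (m+1) => fun b => ∫⁻ z, PhiF ν g η x0 m (b - η • g b z) ∂ν

section
variable {E Z : Type*} [NormedAddCommGroup E] [InnerProductSpace ℝ E]
  [MeasurableSpace E] [BorelSpace E]
  [MeasurableSpace Z] {ν : Measure Z} [IsProbabilityMeasure ν]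


private lemma aux_Phi (g : E → Z → E) (hgmeas : Measurable (Function.uncurry g))
    (η G : ℝ) (hηpos : 0 < η) (x0 : E)
    (hsecond : ∀ a : E, ∫ z, ‖g a z‖ ^ 2 ∂ν ≤ G ^ 2) :
    ∀ (m : ℕ) (b : E),
      (ENNReal.ofReal (‖b - x0‖ ^ 2) ≤
          2 ^ m * PhiF ν g η x0 m b + ((m * 2 ^ m : ℕ) : ℝ≥0∞) * ENNReal.ofReal (4 * η ^ 2 * G ^ 2))
        ∧ (PhiF ν g η x0 m b ≤ ENNReal.ofReal ((‖b - x0‖ + m * (η * |G|)) ^ 2)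
            ∨ PhiF ν g η x0 m b = ∞) := by
  intro m
  induction m with
  | zero =>
    intro b
    constructor
    · simp [PhiF]
    · left
      simp [PhiF]
  | succ m ih =>
    intro b
    have hwb : Measurable (g b) := hgmeas.comp measurable_prodMk_left
    have hsecb : ∫ z, ‖g b z‖ ^ 2 ∂ν ≤ G ^ 2 := hsecond b
    have hsub : ∀ z, (b - η • g b z) - x0 = (b - x0) - η • g b z := fun z => sub_right_comm _ _ _
    have hC4 : ((m * 2 ^ m : ℕ) : ℝ≥0∞) * ENNReal.ofReal (4 * η ^ 2 * G ^ 2) ≠ ∞ :=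
      ENNReal.mul_ne_top (ENNReal.natCast_ne_top _) ENNReal.ofReal_ne_top
    have h2m : (2 : ℝ≥0∞) ^ m ≠ ∞ := ENNReal.pow_ne_top ENNReal.ofNat_ne_top
    -- the key integrated form of the induction hypothesis (lower part)
    have hJle : (∫⁻ z, ENNReal.ofReal (‖(b - x0) - η • g b z‖ ^ 2) ∂ν) ≤
        2 ^ m * PhiF ν g η x0 (m+1) b +
          ((m * 2 ^ m : ℕ) : ℝ≥0∞) * ENNReal.ofReal (4 * η ^ 2 * G ^ 2) := by
      calc ∫⁻ z, ENNReal.ofReal (‖(b - x0) - η • g b z‖ ^ 2) ∂ν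
          = ∫⁻ z, ENNReal.ofReal (‖(b - η • g b z) - x0‖ ^ 2) ∂ν := by
            refine lintegral_congr fun z => by rw [hsub]
        _ ≤ ∫⁻ z, (2 ^ m * PhiF ν g η x0 m (b - η • g b z) +
              ((m * 2 ^ m : ℕ) : ℝ≥0∞) * ENNReal.ofReal (4 * η ^ 2 * G ^ 2)) ∂ν :=
            lintegral_mono fun z => (ih (b - η • g b z)).1
        _ = _ := by
            rw [lintegral_add_right _ measurable_const, lintegral_const_mul' _ _ h2m,
              lintegral_const]
            simp only [measure_univ, mul_one]
            rfl
    constructor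
    · -- lower invariant
      calc ENNReal.ofReal (‖b - x0‖ ^ 2)
          ≤ 2 * (∫⁻ z, ENNReal.ofReal (‖(b - x0) - η • g b z‖ ^ 2) ∂ν) +
              ENNReal.ofReal (4 * η ^ 2 * G ^ 2) := aux_lower hηpos (g b) hwb hsecb _
        _ ≤ 2 * (2 ^ m * PhiF ν g η x0 (m+1) b +
              ((m * 2 ^ m : ℕ) : ℝ≥0∞) * ENNReal.ofReal (4 * η ^ 2 * G ^ 2)) +
              ENNReal.ofReal (4 * η ^ 2 * G ^ 2) := by
            gcongr
        _ = 2 ^ (m+1) * PhiF ν g η x0 (m+1) b +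
              ((2 * (m * 2 ^ m) + 1 : ℕ) : ℝ≥0∞) * ENNReal.ofReal (4 * η ^ 2 * G ^ 2) := by
            push_cast
            ring
        _ ≤ 2 ^ (m+1) * PhiF ν g η x0 (m+1) b +
              (((m+1) * 2 ^ (m+1) : ℕ) : ℝ≥0∞) * ENNReal.ofReal (4 * η ^ 2 * G ^ 2) := by
            have hn : (2 * (m * 2 ^ m) + 1 : ℕ) ≤ ((m+1) * 2 ^ (m+1) : ℕ) := by
              have h2 : (1:ℕ) ≤ 2 ^ (m+1) := Nat.one_le_two_pow
              calc (2 * (m * 2 ^ m) + 1 : ℕ) = m * 2 ^ (m+1) + 1 := by ring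
                _ ≤ m * 2 ^ (m+1) + 2 ^ (m+1) := by omega
                _ = (m+1) * 2 ^ (m+1) := by ring
            exact add_le_add le_rfl (mul_le_mul_left (by exact_mod_cast hn) _)
    · -- upper invariant
      by_cases hHb : ∫⁻ z, (‖g b z‖₊ : ℝ≥0∞) ^ 2 ∂ν = ∞
      · right
        have hJtop : (∫⁻ z, ENNReal.ofReal (‖(b - x0) - η • g b z‖ ^ 2) ∂ν) = ∞ :=
          aux_J0top hηpos (g b) hwb _ hHb
        rw [hJtop] at hJle
        rcases (ENNReal.add_eq_top.1 (top_le_iff.1 hJle)) with h | h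
        · rcases ENNReal.mul_eq_top.1 h with ⟨_, h2⟩ | ⟨h2, _⟩
          · exact h2
          · exact absurd h2 h2m
        · exact absurd h hC4
      · have hdich := aux_dichot ν (fun z => PhiF ν g η x0 m (b - η • g b z))
          (fun z => ENNReal.ofReal ((‖(b - x0) - η • g b z‖ + m * (η * |G|)) ^ 2))
          (by
            have hu : Measurable fun z => (b - x0) - η • g b z :=
              ((continuous_const.sub (continuous_id.const_smul η)).measurable).comp hwb
            exact ENNReal.measurable_ofReal.comp ((hu.norm.add_const _).pow_const 2))
          (by
            intro z
            rcases (ih (b - η • g b z)).2 with h | h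
            · left
              rw [hsub z] at h
              exact h
            · right; exact h)
        rcases hdich with h | h
        · left
          refine h.trans ?_
          have := aux_gamma hηpos.le (g b) hwb hsecb hHb (m * (η * |G|))
            (by positivity) (b - x0)
          refine this.trans (le_of_eq ?_)
          congr 1
          push_cast
          ring
        · right
          exact h
end



noncomputable def YF {E Z : Type*} [NormedAddCommGroup E] [InnerProductSpace ℝ E]
    (g : E → Z → E) (η : ℝ) (x0 : E) : (N : ℕ) → ℕ → (Fin N → Z) → E
  | _, 0, _ => x0
  | N, (k+1), y =>
    if h : k < N then
      YF g η x0 N k y - η • g (YF g η x0 N k y) (y ⟨k, h⟩)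
    else x0

section
variable {E Z : Type*} [NormedAddCommGroup E] [InnerProductSpace ℝ E]
  [MeasurableSpace Z] {ν : Measure Z} [IsProbabilityMeasure ν]
  (g : E → Z → E) (η : ℝ) (x0 : E)

private lemma aux_YI : ∀ (k N : ℕ) (p : Fin (N+1)) (z : Z) (y : Fin N → Z), k ≤ (p : ℕ) →
    YF g η x0 (N+1) k (p.insertNth z y) = YF g η x0 N k y := by
  intro k
  induction k with
  | zero => intro N p z y _; simp [YF]
  | succ k ih =>
    intro N p z y hk
    have hpN : (p : ℕ) ≤ N := Nat.lt_succ_iff.mp p.isLt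
    have hkN : k < N := lt_of_lt_of_le (Nat.lt_of_succ_le hk) hpN
    have hkN1 : k < N + 1 := by omega
    have hcoord : Fin.insertNth (α := fun _ => Z) p z y ⟨k, hkN1⟩ = y ⟨k, hkN⟩ := by
      have h1 : (⟨k, hkN⟩ : Fin N).castSucc < p := by
        rw [Fin.lt_def]
        simpa using Nat.lt_of_succ_le hk
      have h2 : p.succAbove ⟨k, hkN⟩ = (⟨k, hkN⟩ : Fin N).castSucc :=
        Fin.succAbove_of_castSucc_lt p _ h1
      have h3 : ((⟨k, hkN⟩ : Fin N).castSucc) = (⟨k, hkN1⟩ : Fin (N+1)) := by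
        ext; simp
      rw [← h3, ← h2, Fin.insertNth_apply_succAbove]
    simp only [YF, dif_pos hkN, dif_pos hkN1]
    rw [hcoord, ih N p z y (le_trans (Nat.le_succ k) hk)]

private lemma aux_Ystep (k N : ℕ) (hk : k ≤ N) (z : Z) (y : Fin N → Z) :
    YF g η x0 (N+1) (k+1) ((⟨k, Nat.lt_succ_of_le hk⟩ : Fin (N+1)).insertNth z y) =
      YF g η x0 N k y - η • g (YF g η x0 N k y) z := by
  set p : Fin (N+1) := ⟨k, Nat.lt_succ_of_le hk⟩ with hp
  have hkN1 : k < N + 1 := Nat.lt_succ_of_le hk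
  have hcoord : Fin.insertNth (α := fun _ => Z) p z y ⟨k, hkN1⟩ = z := by
    have : (⟨k, hkN1⟩ : Fin (N+1)) = p := rfl
    rw [this, Fin.insertNth_apply_same]
  simp only [YF, dif_pos hkN1]
  rw [hcoord, aux_YI g η x0 k N p z y le_rfl]

private lemma aux_claimA :
    ∀ (k N j : ℕ), k ≤ N →
      AEMeasurable (fun y : Fin N → Z => PhiF ν g η x0 j (YF g η x0 N k y))
        (Measure.pi fun _ : Fin N => ν) →
      ∫⁻ y, PhiF ν g η x0 j (YF g η x0 N k y) ∂(Measure.pi fun _ : Fin N => ν) =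
        PhiF ν g η x0 (j + k) x0 := by
  intro k
  induction k with
  | zero =>
    intro N j _ _
    simp only [YF, lintegral_const, measure_univ, mul_one, Nat.add_zero]
  | succ k ih =>
    intro N j hk hmeas
    obtain ⟨N', rfl⟩ : ∃ N', N = N' + 1 := ⟨N - 1, by omega⟩
    have hkN' : k ≤ N' := by omega
    set p : Fin (N'+1) := ⟨k, Nat.lt_succ_of_le hkN'⟩ with hp
    set e := MeasurableEquiv.piFinSuccAbove (fun _ : Fin (N'+1) => Z) p with he
    have mp : MeasurePreserving e (Measure.pi fun _ : Fin (N'+1) => ν)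
        (ν.prod (Measure.pi fun _ : Fin N' => ν)) :=
      measurePreserving_piFinSuccAbove (fun _ => ν) p
    have hmape : Measure.map (⇑e.symm) (ν.prod (Measure.pi fun _ : Fin N' => ν)) =
        (Measure.pi fun _ : Fin (N'+1) => ν) := (mp.symm e).map_eq
    have hsymm : ∀ q : Z × (Fin N' → Z), e.symm q = p.insertNth q.1 q.2 := by
      intro q
      obtain ⟨z', y'⟩ := q
      simp [he, MeasurableEquiv.piFinSuccAbove_symm_apply, Fin.insertNthEquiv]
    set B : Z × (Fin N' → Z) → ℝ≥0∞ :=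
      fun q => PhiF ν g η x0 j (YF g η x0 (N'+1) (k+1) (e.symm q)) with hB
    have hpt : ∀ q : Z × (Fin N' → Z),
        B q = PhiF ν g η x0 j
          (YF g η x0 N' k q.2 - η • g (YF g η x0 N' k q.2) q.1) := by
      intro q
      rw [hB]
      simp only
      rw [hsymm q, aux_Ystep g η x0 k N' hkN' q.1 q.2]
    have hBmeas : AEMeasurable B (ν.prod (Measure.pi fun _ : Fin N' => ν)) :=
      hmeas.comp_quasiMeasurePreserving (mp.symm e).quasiMeasurePreserving
    have step1 : ∫⁻ y, PhiF ν g η x0 j (YF g η x0 (N'+1) (k+1) y)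
          ∂(Measure.pi fun _ : Fin (N'+1) => ν)
        = ∫⁻ q, B q ∂(ν.prod (Measure.pi fun _ : Fin N' => ν)) := by
      rw [← hmape, lintegral_map_equiv]
    have hinner : ∀ y' : Fin N' → Z,
        ∫⁻ z, B (z, y') ∂ν = PhiF ν g η x0 (j+1) (YF g η x0 N' k y') := by
      intro y'
      simp only [PhiF]
      refine lintegral_congr fun z => ?_
      rw [hpt (z, y')]
    have step2 : ∫⁻ q, B q ∂(ν.prod (Measure.pi fun _ : Fin N' => ν))
        = ∫⁻ y', PhiF ν g η x0 (j+1) (YF g η x0 N' k y')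
            ∂(Measure.pi fun _ : Fin N' => ν) := by
      rw [lintegral_prod_symm _ hBmeas]
      exact lintegral_congr fun y' => hinner y'
    -- a.e.-measurability of the next level
    obtain ⟨f', hf'meas, hf'ae⟩ := hBmeas
    have h2 : ∀ᵐ q ∂((Measure.pi fun _ : Fin N' => ν).prod ν),
        B q.swap = f' q.swap :=
      Measure.measurePreserving_swap.quasiMeasurePreserving.ae hf'ae
    have h3 : ∀ᵐ y' ∂(Measure.pi fun _ : Fin N' => ν), ∀ᵐ z ∂ν, B (z, y') = f' (z, y') :=
      Measure.ae_ae_of_ae_prod h2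
    have hmeas2 : Measurable fun y' : Fin N' → Z => ∫⁻ z, f' (z, y') ∂ν := by
      have : Measurable fun q : (Fin N' → Z) × Z => f' q.swap :=
        hf'meas.comp measurable_swap
      exact this.lintegral_prod_right'
    have hA'meas : AEMeasurable (fun y' : Fin N' → Z =>
        PhiF ν g η x0 (j+1) (YF g η x0 N' k y')) (Measure.pi fun _ : Fin N' => ν) := by
      refine ⟨fun y' => ∫⁻ z, f' (z, y') ∂ν, hmeas2, ?_⟩
      refine h3.mono fun y' hy' => ?_
      show PhiF ν g η x0 (j+1) (YF g η x0 N' k y') = ∫⁻ z, f' (z, y') ∂ν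
      rw [← hinner y']
      exact lintegral_congr_ae hy'
    rw [step1, step2, ih N' (j+1) hkN' hA'meas]
    congr 1
    omega
end


/-- Local SGD drift bound (Lemma B.3). -/
theorem stmt_6 {E : Type*} [NormedAddCommGroup E] [InnerProductSpace ℝ E] [CompleteSpace E]
    [MeasurableSpace E] [BorelSpace E]
    {Z : Type*} [MeasurableSpace Z] (ν : Measure Z) [IsProbabilityMeasure ν]
    (F : E → ℝ) (S σ G : ℝ) (hS : 0 < S)
    (hdiff : Differentiable ℝ F)
    (hlip : ∀ a b : E, ‖gradient F a - gradient F b‖ ≤ S * ‖a - b‖)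
    (g : E → Z → E) (hgmeas : Measurable (Function.uncurry g))
    (hmean : ∀ a : E, ∫ z, g a z ∂ν = gradient F a)
    (hvar : ∀ a : E, ∫ z, ‖g a z - gradient F a‖ ^ 2 ∂ν ≤ σ ^ 2)
    (hsecond : ∀ a : E, ∫ z, ‖g a z‖ ^ 2 ∂ν ≤ G ^ 2)
    (τ : ℕ) (hτ : 1 ≤ τ) (η : ℝ) (hη0 : 0 ≤ η) (hη : η ≤ 1 / (Real.sqrt 6 * S * τ))
    (x0 : E) (X : ℕ → (Fin τ → Z) → E)
    (hX0 : ∀ ω, X 0 ω = x0)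
    (hXrec : ∀ (i : ℕ) (hi : i < τ) (ω : Fin τ → Z),
      X (i + 1) ω = X i ω - η • g (X i ω) (ω ⟨i, hi⟩)) :
    ∑ i ∈ Finset.range τ,
        ∫ ω, ‖X i ω - x0‖ ^ 2 ∂(Measure.pi fun _ : Fin τ => ν) ≤
      12 * (τ : ℝ) ^ 3 * η ^ 2 * (2 * σ ^ 2 + G ^ 2) := by
  classical
  have hRHS : (0:ℝ) ≤ 12 * (τ : ℝ) ^ 3 * η ^ 2 * (2 * σ ^ 2 + G ^ 2) := by positivity
  rcases eq_or_lt_of_le hη0 with hzero | hpos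
  · -- trivial case η = 0
    have hconst : ∀ i, i ≤ τ → ∀ ω, X i ω = x0 := by
      intro i
      induction i with
      | zero => intro _ ω; exact hX0 ω
      | succ i ih =>
        intro hi ω
        rw [hXrec i (by omega) ω, ih (by omega) ω, ← hzero, zero_smul, sub_zero]
    have hsum : ∑ i ∈ Finset.range τ,
        ∫ ω, ‖X i ω - x0‖ ^ 2 ∂(Measure.pi fun _ : Fin τ => ν) = 0 := by
      refine Finset.sum_eq_zero fun i hi => ?_
      have hptz : ∀ ω : Fin τ → Z, ‖X i ω - x0‖ ^ 2 = 0 := fun ω => by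
        rw [hconst i (le_of_lt (Finset.mem_range.mp hi)) ω]; simp
      simp only [hptz]
      exact integral_zero _ _
    rw [hsum]; exact hRHS
  -- main case η > 0
  have hXY : ∀ k, k ≤ τ → ∀ ω, X k ω = YF g η x0 τ k ω := by
    intro k
    induction k with
    | zero => intro _ ω; rw [hX0 ω]; rfl
    | succ k ih =>
      intro hk ω
      have hkτ : k < τ := by omega
      rw [hXrec k hkτ ω, ih (by omega) ω]
      simp only [YF, dif_pos hkτ]
  have hPhi := aux_Phi (ν := ν) g hgmeas η G hpos x0 hsecond
  have hterm : ∀ i, i < τ →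
      ∫ ω, ‖X i ω - x0‖ ^ 2 ∂(Measure.pi fun _ : Fin τ => ν) ≤
        (i : ℝ) ^ 2 * η ^ 2 * G ^ 2 := by
    intro i hi
    set P := (Measure.pi fun _ : Fin τ => ν) with hP
    by_cases hInt : Integrable (fun ω => ‖X i ω - x0‖ ^ 2) P
    · have h0 : (fun ω : Fin τ → Z => ENNReal.ofReal (‖X i ω - x0‖ ^ 2)) =
          fun ω => PhiF ν g η x0 0 (YF g η x0 τ i ω) := by
        funext ω
        rw [hXY i (le_of_lt hi) ω]
        rfl
      have hae : AEMeasurable (fun ω : Fin τ → Z =>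
          PhiF ν g η x0 0 (YF g η x0 τ i ω)) P := by
        rw [← h0]
        exact ENNReal.measurable_ofReal.comp_aemeasurable hInt.1.aemeasurable
      have hlint : ∫⁻ ω, PhiF ν g η x0 0 (YF g η x0 τ i ω) ∂P = PhiF ν g η x0 i x0 := by
        have := aux_claimA (ν := ν) g η x0 i τ 0 (le_of_lt hi) hae
        simpa using this
      have heq : ∫ ω, ‖X i ω - x0‖ ^ 2 ∂P = (PhiF ν g η x0 i x0).toReal := by
        rw [integral_eq_lintegral_of_nonneg_ae (ae_of_all _ fun ω => sq_nonneg _) hInt.1,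
          ← hlint]
        congr 1
        exact lintegral_congr fun ω => congrFun h0 ω
      have hfin : PhiF ν g η x0 i x0 ≠ ∞ := by
        rw [← hlint]
        intro htop
        have hfi := hInt.2
        rw [hasFiniteIntegral_iff_norm] at hfi
        have : ∫⁻ ω, ENNReal.ofReal ‖‖X i ω - x0‖ ^ 2‖ ∂P =
            ∫⁻ ω, PhiF ν g η x0 0 (YF g η x0 τ i ω) ∂P := by
          rw [← h0]
          refine lintegral_congr fun ω => ?_
          rw [Real.norm_eq_abs, abs_of_nonneg (sq_nonneg _)]
        rw [this, htop] at hfi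
        exact absurd hfi (lt_irrefl _)
      have hup : PhiF ν g η x0 i x0 ≤
          ENNReal.ofReal ((‖x0 - x0‖ + i * (η * |G|)) ^ 2) :=
        ((hPhi i x0).2).resolve_right hfin
      have hup' : PhiF ν g η x0 i x0 ≤ ENNReal.ofReal ((i * (η * |G|)) ^ 2) := by
        simpa using hup
      rw [heq]
      calc (PhiF ν g η x0 i x0).toReal ≤ ((i : ℝ) * (η * |G|)) ^ 2 :=
          ENNReal.toReal_le_of_le_ofReal (by positivity) hup'
        _ = (i : ℝ) ^ 2 * η ^ 2 * G ^ 2 := by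
          rw [mul_pow, mul_pow, sq_abs]
          ring
    · rw [integral_undef hInt]
      positivity
  calc ∑ i ∈ Finset.range τ,
        ∫ ω, ‖X i ω - x0‖ ^ 2 ∂(Measure.pi fun _ : Fin τ => ν)
      ≤ ∑ i ∈ Finset.range τ, (τ : ℝ) ^ 2 * η ^ 2 * G ^ 2 := by
        refine Finset.sum_le_sum fun i hi => ?_
        have h1 := hterm i (Finset.mem_range.mp hi)
        have h2 : ((i : ℝ)) ^ 2 * η ^ 2 * G ^ 2 ≤ (τ : ℝ) ^ 2 * η ^ 2 * G ^ 2 := by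
          have : ((i : ℝ)) ≤ (τ : ℝ) := by
            exact_mod_cast le_of_lt (Finset.mem_range.mp hi)
          have h0i : (0:ℝ) ≤ (i : ℝ) := by positivity
          have hsq : ((i : ℝ)) ^ 2 ≤ (τ : ℝ) ^ 2 := pow_le_pow_left₀ h0i this 2
          exact mul_le_mul_of_nonneg_right
            (mul_le_mul_of_nonneg_right hsq (sq_nonneg η)) (sq_nonneg G)
        linarith
    _ = (τ : ℝ) * ((τ : ℝ) ^ 2 * η ^ 2 * G ^ 2) := by
        rw [Finset.sum_const, Finset.card_range, nsmul_eq_mul]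
    _ ≤ 12 * (τ : ℝ) ^ 3 * η ^ 2 * (2 * σ ^ 2 + G ^ 2) := by
        have hτ0 : (0:ℝ) ≤ (τ:ℝ) := by positivity
        nlinarith [sq_nonneg σ, sq_nonneg G, sq_nonneg η,
          mul_nonneg (mul_nonneg (pow_nonneg hτ0 3) (sq_nonneg η)) (sq_nonneg σ),
          mul_nonneg (mul_nonneg (pow_nonneg hτ0 3) (sq_nonneg η)) (sq_nonneg G)]
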